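/- Let L ≥ 2, let v, w ∈ V be vertices whose third coordinates agree (v₂ = w₂), and let k ∈ ZMod L. Then there exists a Z-error E whose vertex syndrome σ_A(E) equals the pointwise ZMod 2 sum of indicator functions 𝟙{v} + 𝟙{w} + 𝟙{v + k·e₂} + 𝟙{w + k·e₂}. (A pair of fracton defects lying in a common constant-z lattice plane forms a planon that can be translated freely in the z direction by a Pauli-Z operator; this is the defect-movement step used in the planeon neutralization procedure.) -/

import Mathlib

/-- Positions on the periodic cubic lattice of linear size `L`. -/
abbrev V (L : ℕ) : Type := Fin 3 → ZMod L

/-- The standard basis vector in direction `i`. -/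
def e (L : ℕ) (i : Fin 3) : V L := Pi.single i 1

/-- The two directions/colors different from a given one. -/
def oth : Fin 3 → Fin 3 × Fin 3 := ![(1, 2), (0, 2), (0, 1)]

/-- The `c`-colored cell syndrome of an X-error `F` at the cell `p`. -/
def cellSyn (L : ℕ) (F : V L × Fin 3 → ZMod 2) (c : Fin 3) (p : V L) : ZMod 2 :=
  ∑ i ∈ Finset.univ.filter (fun i : Fin 3 => i ≠ c), (F (p, i) + F (p + e L i, i))

/-- The vertex syndrome of a Z-error `E` at the vertex `v`. -/
def vertSyn (L : ℕ) (E : V L × Fin 3 → ZMod 2) (v : V L) : ZMod 2 :=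
  ∑ i : Fin 3, ∑ a : Fin 2, ∑ b : Fin 2,
    E (v - ((a : ℕ) : ZMod L) • e L (oth i).1 - ((b : ℕ) : ZMod L) • e L (oth i).2, i)

lemma vertSyn_add (L : ℕ) (E F : V L × Fin 3 → ZMod 2) (u : V L) :
    vertSyn L (fun q => E q + F q) u = vertSyn L E u + vertSyn L F u := by
  simp [vertSyn, Finset.sum_add_distrib]

lemma vertSyn_sum {ι : Type*} [DecidableEq ι] (L : ℕ) (S : Finset ι) (f : ι → V L × Fin 3 → ZMod 2) (u : V L) :
    vertSyn L (fun q => ∑ x ∈ S, f x q) u = ∑ x ∈ S, vertSyn L (f x) u := by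
  induction S using Finset.induction with
  | empty => simp [vertSyn]
  | @insert a s h ih =>
    rw [Finset.sum_insert h, ← ih, ← vertSyn_add]
    simp [Finset.sum_insert h]

lemma vertSyn_face1 (L : ℕ) (p : V L) (u : V L) :
    vertSyn L (fun q => if q = (p, 1) then 1 else 0) u =
      (if u = p then 1 else 0) + (if u = p + e L 0 then 1 else 0) +
      (if u = p + e L 2 then 1 else 0) + (if u = p + e L 0 + e L 2 then 1 else 0) := by
  simp only [vertSyn, Fin.sum_univ_three, Fin.sum_univ_two]
  simp [oth, Prod.ext_iff, sub_sub, sub_eq_iff_eq_add, add_comm, add_assoc, add_left_comm]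

lemma vertSyn_face0 (L : ℕ) (p : V L) (u : V L) :
    vertSyn L (fun q => if q = (p, 0) then 1 else 0) u =
      (if u = p then 1 else 0) + (if u = p + e L 1 then 1 else 0) +
      (if u = p + e L 2 then 1 else 0) + (if u = p + e L 1 + e L 2 then 1 else 0) := by
  simp only [vertSyn, Fin.sum_univ_three, Fin.sum_univ_two]
  simp [oth, Prod.ext_iff, sub_sub, sub_eq_iff_eq_add, add_comm, add_assoc, add_left_comm]

lemma telescope (m : ℕ) (h : ℕ → ZMod 2) :
    ∑ t ∈ Finset.range m, (h t + h (t + 1)) = h 0 + h m := by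
  induction m with
  | zero => simp [CharTwo.add_self_eq_zero]
  | succ n ih =>
    rw [Finset.sum_range_succ, ih]
    linear_combination (CharTwo.add_self_eq_zero (h n))

lemma telescope2 (m κ : ℕ) (g : ℕ → ℕ → ZMod 2) :
    ∑ t ∈ Finset.range m, ∑ s ∈ Finset.range κ,
      (g t s + g (t + 1) s + g t (s + 1) + g (t + 1) (s + 1))
    = g 0 0 + g m 0 + g 0 κ + g m κ := by
  have h1 : ∀ t, ∑ s ∈ Finset.range κ,
      (g t s + g (t + 1) s + g t (s + 1) + g (t + 1) (s + 1))
      = (g t 0 + g (t + 1) 0) + (g t κ + g (t + 1) κ) := by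
    intro t
    have h := telescope κ (fun s => g t s + g (t + 1) s)
    rw [← h]
    exact Finset.sum_congr rfl (fun s _ => by ring)
  simp only [h1]
  rw [Finset.sum_add_distrib, telescope m (fun t => g t 0), telescope m (fun t => g t κ)]
  ring

/-- A pair of fracton defects in a common constant-`z` plane forms a planon
that can be translated freely in the `z` direction by a Pauli-Z operator. -/
theorem stmt_18 (L : ℕ) [NeZero L] (hL : 2 ≤ L) (v w : V L)
    (hvw : v 2 = w 2) (k : ZMod L) :
    ∃ E : V L × Fin 3 → ZMod 2, vertSyn L E = fun u : V L =>
      (if u = v then 1 else 0) + (if u = w then 1 else 0) +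
      (if u = v + k • e L 2 then 1 else 0) + (if u = w + k • e L 2 then 1 else 0) := by
  set m : ℕ := (w 0 - v 0).val with hm_def
  set n : ℕ := (w 1 - v 1).val with hn_def
  set κ : ℕ := k.val with hκ_def
  have hm : ((m : ℕ) : ZMod L) = w 0 - v 0 := by simp [hm_def, ZMod.natCast_val, ZMod.cast_id]
  have hn : ((n : ℕ) : ZMod L) = w 1 - v 1 := by simp [hn_def, ZMod.natCast_val, ZMod.cast_id]
  have hκ : ((κ : ℕ) : ZMod L) = k := by simp [hκ_def, ZMod.natCast_val, ZMod.cast_id]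
  set v' : V L := v + ((m : ℕ) : ZMod L) • e L 0 with hv'_def
  have hw : v' + ((n : ℕ) : ZMod L) • e L 1 = w := by
    funext j
    fin_cases j <;>
      simp [hv'_def, e, hm, hn, Pi.single, Function.update, smul_eq_mul, hvw]
  refine ⟨fun q =>
      (∑ x ∈ Finset.range m ×ˢ Finset.range κ,
        if q = (v + ((x.1 : ℕ) : ZMod L) • e L 0 + ((x.2 : ℕ) : ZMod L) • e L 2, 1) then 1 else 0) +
      (∑ x ∈ Finset.range n ×ˢ Finset.range κ,
        if q = (v' + ((x.1 : ℕ) : ZMod L) • e L 1 + ((x.2 : ℕ) : ZMod L) • e L 2, 0) then 1 else 0),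
    ?_⟩
  funext u
  rw [vertSyn_add, vertSyn_sum, vertSyn_sum]
  rw [Finset.sum_product, Finset.sum_product]
  have step1 : ∀ t s : ℕ,
      vertSyn L (fun q => if q = (v + ((t : ℕ) : ZMod L) • e L 0 + ((s : ℕ) : ZMod L) • e L 2, 1) then 1 else 0) u
      = (fun t s : ℕ => if u = v + ((t : ℕ) : ZMod L) • e L 0 + ((s : ℕ) : ZMod L) • e L 2 then 1 else 0) t s
      + (fun t s : ℕ => if u = v + ((t : ℕ) : ZMod L) • e L 0 + ((s : ℕ) : ZMod L) • e L 2 then 1 else 0) (t+1) s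
      + (fun t s : ℕ => if u = v + ((t : ℕ) : ZMod L) • e L 0 + ((s : ℕ) : ZMod L) • e L 2 then 1 else 0) t (s+1)
      + (fun t s : ℕ => if u = v + ((t : ℕ) : ZMod L) • e L 0 + ((s : ℕ) : ZMod L) • e L 2 then 1 else 0) (t+1) (s+1) := by
    intro t s
    rw [vertSyn_face1]
    have e1 : ∀ t s : ℕ, v + ((t : ℕ) : ZMod L) • e L 0 + ((s : ℕ) : ZMod L) • e L 2 + e L 0
        = v + (((t+1 : ℕ)) : ZMod L) • e L 0 + ((s : ℕ) : ZMod L) • e L 2 := by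
      intro t s; push_cast; rw [add_smul, one_smul]; abel
    have e2 : ∀ t s : ℕ, v + ((t : ℕ) : ZMod L) • e L 0 + ((s : ℕ) : ZMod L) • e L 2 + e L 2
        = v + ((t : ℕ) : ZMod L) • e L 0 + (((s+1 : ℕ)) : ZMod L) • e L 2 := by
      intro t s; push_cast; rw [add_smul, one_smul]; abel
    simp only [e1, e2]
  have step2 : ∀ t s : ℕ,
      vertSyn L (fun q => if q = (v' + ((t : ℕ) : ZMod L) • e L 1 + ((s : ℕ) : ZMod L) • e L 2, 0) then 1 else 0) u
      = (fun t s : ℕ => if u = v' + ((t : ℕ) : ZMod L) • e L 1 + ((s : ℕ) : ZMod L) • e L 2 then 1 else 0) t s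
      + (fun t s : ℕ => if u = v' + ((t : ℕ) : ZMod L) • e L 1 + ((s : ℕ) : ZMod L) • e L 2 then 1 else 0) (t+1) s
      + (fun t s : ℕ => if u = v' + ((t : ℕ) : ZMod L) • e L 1 + ((s : ℕ) : ZMod L) • e L 2 then 1 else 0) t (s+1)
      + (fun t s : ℕ => if u = v' + ((t : ℕ) : ZMod L) • e L 1 + ((s : ℕ) : ZMod L) • e L 2 then 1 else 0) (t+1) (s+1) := by
    intro t s
    rw [vertSyn_face0]
    have e1 : ∀ t s : ℕ, v' + ((t : ℕ) : ZMod L) • e L 1 + ((s : ℕ) : ZMod L) • e L 2 + e L 1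
        = v' + (((t+1 : ℕ)) : ZMod L) • e L 1 + ((s : ℕ) : ZMod L) • e L 2 := by
      intro t s; push_cast; rw [add_smul, one_smul]; abel
    have e2 : ∀ t s : ℕ, v' + ((t : ℕ) : ZMod L) • e L 1 + ((s : ℕ) : ZMod L) • e L 2 + e L 2
        = v' + ((t : ℕ) : ZMod L) • e L 1 + (((s+1 : ℕ)) : ZMod L) • e L 2 := by
      intro t s; push_cast; rw [add_smul, one_smul]; abel
    simp only [e1, e2]
  rw [Finset.sum_congr rfl (fun t _ => Finset.sum_congr rfl (fun s _ => step1 t s)),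
      Finset.sum_congr rfl (fun t _ => Finset.sum_congr rfl (fun s _ => step2 t s)),
      telescope2, telescope2]
  simp only [Nat.cast_zero, zero_smul, add_zero, hκ, hw]
  rw [show v + ((m : ℕ) : ZMod L) • e L 0 = v' from rfl]
  linear_combination (CharTwo.add_self_eq_zero ((if u = v' then 1 else 0 : ZMod 2)))
    + (CharTwo.add_self_eq_zero ((if u = v' + k • e L 2 then 1 else 0 : ZMod 2)))
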